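/- Assume f is irreducible and has nonzero Hessian, and let A be a nonzero prolongation of f with character χ. Suppose there are a, a' ∈ ℂ and linear maps h, h' : W* → W such that A_{ww} = 2a·χ(w)·w + h(f_{ww}) and A_{ww} = 2a'·χ(w)·w + h'(f_{ww}) for all w ∈ W. Then a = a' and h = h'. -/

import Mathlib

open Module Function

set_option linter.unusedSectionVars false

section Aux
variable {W : Type*} [AddCommGroup W] [Module ℂ W] [FiniteDimensional ℂ W]

/-- Polarization: a symmetric trilinear form whose cubic form vanishes is zero. -/
lemma cubic_zero_aux (f : W →ₗ[ℂ] W →ₗ[ℂ] W →ₗ[ℂ] ℂ)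
    (hsym1 : ∀ u v w : W, f u v w = f v u w)
    (hsym2 : ∀ u v w : W, f u v w = f u w v)
    (hP : ∀ w : W, f w w w = 0) : f = 0 := by
  have h1 : ∀ u v : W, f u u v = - f v v u := by
    intro u v
    have e := hP (u + v)
    simp only [map_add, LinearMap.add_apply] at e
    linear_combination (e - hP u - hP v - hsym1 v u u - 2*(hsym2 u v u)
      - 2*(hsym2 v u v) - hsym1 u v v) / 3
  have h2 : ∀ u v w : W, f u v w = 0 := by
    intro u v w
    have e := h1 (u + w) v
    simp only [map_add, LinearMap.add_apply] at e
    linear_combination hsym2 u v w + (e - h1 u v - h1 w v - hsym1 w u v) / 2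
  ext u v w
  exact h2 u v w

/-- Key vanishing lemma. -/
lemma key_vanish (f : W →ₗ[ℂ] W →ₗ[ℂ] W →ₗ[ℂ] ℂ)
    (hsym1 : ∀ u v w : W, f u v w = f v u w)
    (hsym2 : ∀ u v w : W, f u v w = f u w v)
    (w₀ : W) (hw₀ : ∀ v : W, f w₀ v = 0 → v = 0)
    (h : (W →ₗ[ℂ] ℂ) →ₗ[ℂ] W)
    (hid : ∀ u w : W, f u u (h (f u w)) = 0) : h = 0 := by
  have hrk : finrank ℂ W = finrank ℂ (W →ₗ[ℂ] ℂ) := (Module.finrank_linearMap_self ℂ ℂ W).symm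
  have hinj : ∀ u : W, Injective (f u) ↔ Surjective (f u) := fun u =>
    LinearMap.injective_iff_surjective_of_finrank_eq_finrank hrk
  have hinj0 : Injective (f w₀) := by
    intro x y hxy
    have hz : f w₀ (x - y) = 0 := by rw [map_sub, hxy, sub_self]
    exact sub_eq_zero.mp (hw₀ _ hz)
  set e : W ≃ₗ[ℂ] (W →ₗ[ℂ] ℂ) := (f w₀).linearEquivOfInjective hinj0 hrk with he
  have heapp : ∀ x : W, e x = f w₀ x := fun x => rfl
  have main : ∀ (v : W) (α : W →ₗ[ℂ] ℂ), f v v (h α) = 0 := by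
    intro v α
    set E : W →ₗ[ℂ] W := e.symm.toLinearMap ∘ₗ (f v) with hE
    set bad : Set ℂ := {t : ℂ | ¬ Injective (f (w₀ + t • v))} with hbad
    have badfin : bad.Finite := by
      have hsub : bad ⊆ (fun μ : ℂ => -μ⁻¹) '' {μ | Module.End.HasEigenvalue E μ} := by
        intro t ht
        simp only [hbad, Set.mem_setOf_eq] at ht
        rw [← LinearMap.ker_eq_bot] at ht
        obtain ⟨x, hxk, hx0⟩ := Submodule.ne_bot_iff _ |>.mp ht
        have hxk' : f w₀ x + t • f v x = 0 := by
          have : f (w₀ + t • v) x = 0 := hxk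
          simpa [map_add, map_smul] using this
        have hxE : x + t • E x = 0 := by
          have := congrArg e.symm hxk'
          simpa [map_add, map_smul, hE, ← heapp] using this
        have ht0 : t ≠ 0 := by
          rintro rfl
          simp at hxE
          exact hx0 hxE
        refine ⟨-t⁻¹, ?_, by field_simp⟩
        have hev : E x = (-t⁻¹) • x := by
          have h1 : t • E x = -x := by linear_combination (norm := module) hxE
          have h2 : E x = t⁻¹ • (t • E x) := by
            rw [smul_smul, inv_mul_cancel₀ ht0, one_smul]
          rw [h2, h1, smul_neg, neg_smul]
        exact Module.End.hasEigenvalue_of_hasEigenvector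
          ⟨Module.End.mem_eigenspace_iff.mpr hev, hx0⟩
      exact Set.Finite.subset ((Module.End.finite_hasEigenvalue E).image _) hsub
    have hz : ∀ t : ℂ, t ∉ bad →
        f (w₀ + t • v) (w₀ + t • v) (h α) = 0 := by
      intro t ht
      have hs : Surjective (f (w₀ + t • v)) := (hinj _).mp (by simpa [hbad] using ht)
      obtain ⟨w', hw'⟩ := hs α
      have := hid (w₀ + t • v) w'
      rwa [hw'] at this
    set c0 : ℂ := f w₀ w₀ (h α) with hc0
    set c1 : ℂ := f w₀ v (h α) + f v w₀ (h α) with hc1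
    set c2 : ℂ := f v v (h α) with hc2
    have hexp : ∀ t : ℂ, f (w₀ + t • v) (w₀ + t • v) (h α) = c0 + t * c1 + t ^ 2 * c2 := by
      intro t
      simp only [map_add, map_smul, LinearMap.add_apply, LinearMap.smul_apply,
        smul_eq_mul, hc0, hc1, hc2]
      ring
    have h0good : (0 : ℂ) ∉ bad := by
      simp only [hbad, Set.mem_setOf_eq, zero_smul, add_zero, not_not]
      exact hinj0
    have hc00 : c0 = 0 := by simpa [hexp 0] using hz 0 h0good
    obtain ⟨t1, ht1⟩ := (Set.Finite.infinite_compl (badfin.union (Set.finite_singleton 0))).nonempty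
    obtain ⟨t2, ht2⟩ := (Set.Finite.infinite_compl
      ((badfin.union (Set.finite_singleton 0)).union (Set.finite_singleton t1))).nonempty
    simp only [Set.mem_compl_iff, Set.mem_union, Set.mem_singleton_iff, not_or] at ht1 ht2
    have e1 : c1 + t1 * c2 = 0 := by
      have := hz t1 ht1.1
      rw [hexp t1, hc00] at this
      have h' : t1 * (c1 + t1 * c2) = 0 := by ring_nf; linear_combination this
      rcases mul_eq_zero.mp h' with h | h
      · exact absurd h ht1.2
      · exact h
    have e2 : c1 + t2 * c2 = 0 := by
      have := hz t2 ht2.1.1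
      rw [hexp t2, hc00] at this
      have h' : t2 * (c1 + t2 * c2) = 0 := by ring_nf; linear_combination this
      rcases mul_eq_zero.mp h' with h | h
      · exact absurd h ht2.1.2
      · exact h
    have ht12 : t1 - t2 ≠ 0 := sub_ne_zero.mpr (fun hh => ht2.2 hh.symm)
    have : (t1 - t2) * c2 = 0 := by linear_combination e1 - e2
    rcases mul_eq_zero.mp this with h | h
    · exact absurd h ht12
    · exact h
  have quad : ∀ (u v : W) (α : W →ₗ[ℂ] ℂ), f u v (h α) = 0 := by
    intro u v α
    have e := main (u + v) α
    simp only [map_add, LinearMap.add_apply] at e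
    have h' : f u v (h α) + f u v (h α) = 0 := by
      linear_combination e - main u α - main v α - hsym1 v u (h α)
    have h2 : (2:ℂ) * f u v (h α) = 0 := by linear_combination h'
    rcases mul_eq_zero.mp h2 with hh | hh
    · norm_num at hh
    · exact hh
  ext α
  refine hw₀ (h α) ?_
  ext v
  simpa using (hsym2 w₀ (h α) v).trans (hsym1 w₀ v (h α) ▸ quad w₀ v α)

end Aux

/-- For an irreducible `f` with nonzero Hessian and a nonzero
prolongation `A` of `f` with character `χ`, the constant `a` and the linear map
`h` in a presentation `A_{ww} = 2a·χ(w)·w + h(f_{ww})` are uniquely determined. -/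
theorem prolongation_presentation_unique
    {W : Type*} [AddCommGroup W] [Module ℂ W] [FiniteDimensional ℂ W]
    (f : W →ₗ[ℂ] W →ₗ[ℂ] W →ₗ[ℂ] ℂ)
    (hsym1 : ∀ u v w : W, f u v w = f v u w)
    (hsym2 : ∀ u v w : W, f u v w = f u w v)
    (hf : f ≠ 0)
    (hirr : ¬ ∃ (lam : W →ₗ[ℂ] ℂ) (B : W →ₗ[ℂ] W →ₗ[ℂ] ℂ),
      lam ≠ 0 ∧ B ≠ 0 ∧ (∀ u v : W, B u v = B v u) ∧ ∀ w : W, f w w w = lam w * B w w)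
    (hHess : ∃ w : W, ∀ v : W, f w v = 0 → v = 0)
    (A : W →ₗ[ℂ] W →ₗ[ℂ] W) (hA0 : A ≠ 0) (hAsym : ∀ u v : W, A u v = A v u)
    (χ : W →ₗ[ℂ] ℂ)
    (hA : ∀ s u v w : W,
      f (A w u) v s + f u (A w v) s + f u v (A w s) = χ w * f u v s)
    (a a' : ℂ) (h h' : (W →ₗ[ℂ] ℂ) →ₗ[ℂ] W)
    (heq : ∀ w : W, A w w = (2 * a * χ w) • w + h (f w w))
    (heq' : ∀ w : W, A w w = (2 * a' * χ w) • w + h' (f w w)) :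
    a = a' ∧ h = h' := by
  obtain ⟨w₀, hw₀⟩ := hHess
  have hfsym : ∀ u v : W, f u v = f v u := fun u v => LinearMap.ext fun w => hsym1 u v w
  have hrk : finrank ℂ W = finrank ℂ (W →ₗ[ℂ] ℂ) := (Module.finrank_linearMap_self ℂ ℂ W).symm
  have hinj0 : Injective (f w₀) := by
    intro x y hxy
    have hz : f w₀ (x - y) = 0 := by rw [map_sub, hxy, sub_self]
    exact sub_eq_zero.mp (hw₀ _ hz)
  have hsurj0 : Surjective (f w₀) :=
    (LinearMap.injective_iff_surjective_of_finrank_eq_finrank hrk).mp hinj0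
  have E : ∀ w : W, ((2 * a - 2 * a') * χ w) • w = (h' - h) (f w w) := by
    intro w
    have e2 := (heq w).symm.trans (heq' w)
    rw [LinearMap.sub_apply]
    have hsc : ((2 * a - 2 * a') * χ w) • w
        = (2 * a * χ w) • w - (2 * a' * χ w) • w := by
      rw [← sub_smul]; ring_nf
    rw [hsc]
    linear_combination (norm := module) e2
  have Epol : ∀ u v : W, ((2 * a - 2 * a') * χ u) • v + ((2 * a - 2 * a') * χ v) • u
      = (h' - h) (f u v) + (h' - h) (f u v) := by
    intro u v
    have e := E (u + v)
    simp only [map_add, LinearMap.add_apply, mul_add, add_smul, smul_add] at e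
    have hfs : f v u = f u v := hfsym v u
    rw [hfs] at e
    linear_combination (norm := module) e - E u - E v
  by_cases hχ : χ = 0
  · -- character zero: contradiction with A ≠ 0
    exfalso
    have hχ0 : ∀ w : W, χ w = 0 := fun w => by rw [hχ]; rfl
    have hdiag : ∀ w : W, A w w = h (f w w) := by
      intro w
      rw [heq w, hχ0 w]
      simp
    have hAh : ∀ u w : W, A u w = h (f u w) := by
      intro u w
      have e := hdiag (u + w)
      simp only [map_add, LinearMap.add_apply] at e
      rw [hdiag u, hdiag w, hAsym w u, hfsym w u] at e
      have h2 : (2:ℂ) • A u w = (2:ℂ) • h (f u w) := by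
        rw [two_smul, two_smul]
        linear_combination (norm := module) e
      exact smul_right_injective W two_ne_zero h2
    have hid : ∀ u w : W, f u u (h (f u w)) = 0 := by
      intro u w
      have e := hA u u u w
      rw [hχ0 w, zero_mul] at e
      have s1 : f (A w u) u u = f u u (A w u) :=
        (hsym1 (A w u) u u).trans (hsym2 u (A w u) u)
      have s2 : f u (A w u) u = f u u (A w u) := hsym2 u (A w u) u
      have h3 : (3:ℂ) * f u u (A w u) = 0 := by linear_combination e - s1 - s2
      have h4 : f u u (A w u) = 0 := by
        rcases mul_eq_zero.mp h3 with hh | hh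
        · norm_num at hh
        · exact hh
      rw [hAsym w u, hAh u w] at h4
      exact h4
    have h0 : h = 0 := key_vanish f hsym1 hsym2 w₀ hw₀ h hid
    apply hA0
    ext u w
    rw [hAh u w, h0]
    simp
  · obtain ⟨w₁, hw₁⟩ := DFunLike.ne_iff.mp hχ
    have hw₁' : χ w₁ ≠ 0 := by simpa using hw₁
    by_cases had : a = a'
    · -- d = 0, so (h' - h) kills all f u v, hence h = h'
      refine ⟨had, ?_⟩
      have hkz : ∀ u v : W, (h' - h) (f u v) = 0 := by
        intro u v
        have e := Epol u v
        rw [had] at e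
        simp only [sub_self, zero_mul, zero_smul, add_zero, zero_add] at e
        have h2 : (2:ℂ) • (h' - h) (f u v) = (2:ℂ) • (0 : W) := by
          rw [two_smul, smul_zero]
          exact e.symm
        exact smul_right_injective W two_ne_zero h2
      have hk0 : h' - h = 0 := by
        ext α
        obtain ⟨v, hv⟩ := hsurj0 α
        rw [LinearMap.zero_apply, ← hv]
        exact hkz w₀ v
      exact (sub_eq_zero.mp hk0).symm
    · -- a ≠ a': contradiction with irreducibility
      exfalso
      set k : (W →ₗ[ℂ] ℂ) →ₗ[ℂ] W := h' - h with hk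
      have hd0 : (2 * a - 2 * a') ≠ 0 := by
        intro hc
        exact had (by linear_combination hc / 2)
      have hdw₁ : (2 * a - 2 * a') * χ w₁ ≠ 0 := mul_ne_zero hd0 hw₁'
      have hmem : ∀ z : W, ((2 * a - 2 * a') * χ w₁) • z ∈ LinearMap.range k
          → z ∈ LinearMap.range k := by
        rintro z ⟨α, hα⟩
        exact ⟨((2 * a - 2 * a') * χ w₁)⁻¹ • α, by
          rw [map_smul, hα, smul_smul, inv_mul_cancel₀ hdw₁, one_smul]⟩
      have hker_mem : ∀ y : W, χ y = 0 → y ∈ LinearMap.range k := by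
        intro y hy
        apply hmem
        have e := Epol w₁ y
        rw [hy, mul_zero, zero_smul, add_zero] at e
        exact ⟨f w₁ y + f w₁ y, by rw [map_add, ← e]⟩
      have hw₁mem : w₁ ∈ LinearMap.range k := hmem w₁ ⟨f w₁ w₁, (E w₁).symm⟩
      have hksurj : Surjective k := by
        have htop : ∀ x : W, x ∈ LinearMap.range k := by
          intro x
          have hdecomp : x = (x - (χ x / χ w₁) • w₁) + (χ x / χ w₁) • w₁ := by abel
          rw [hdecomp]
          refine Submodule.add_mem _ (hker_mem _ ?_) (Submodule.smul_mem _ _ hw₁mem)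
          simp only [map_sub, map_smul, smul_eq_mul]
          field_simp
          ring
        intro x
        exact htop x
      have hrk' : finrank ℂ (W →ₗ[ℂ] ℂ) = finrank ℂ W := Module.finrank_linearMap_self ℂ ℂ W
      have hkinj : Injective k :=
        (LinearMap.injective_iff_surjective_of_finrank_eq_finrank hrk').mpr hksurj
      set e' : (W →ₗ[ℂ] ℂ) ≃ₗ[ℂ] W := LinearEquiv.ofBijective k ⟨hkinj, hksurj⟩ with he'
      have he'app : ∀ α : W →ₗ[ℂ] ℂ, e' α = k α := fun _ => rfl
      have hfww : ∀ w : W, f w w = ((2 * a - 2 * a') * χ w) • e'.symm w := by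
        intro w
        apply e'.injective
        rw [map_smul, e'.apply_symm_apply, he'app]
        exact (E w).symm
      set lam : W →ₗ[ℂ] ℂ := ((2 * a - 2 * a') / 2) • χ with hlamdef
      set B : W →ₗ[ℂ] W →ₗ[ℂ] ℂ := LinearMap.mk₂ ℂ
        (fun u v => (e'.symm u) v + (e'.symm v) u)
        (fun m₁ m₂ n => by simp only [map_add, LinearMap.add_apply]; ring)
        (fun c m n => by
          simp only [map_smul, LinearMap.smul_apply, smul_eq_mul, smul_add]; ring)
        (fun m n₁ n₂ => by simp only [map_add, LinearMap.add_apply]; ring)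
        (fun c m n => by
          simp only [map_smul, LinearMap.smul_apply, smul_eq_mul, smul_add]; ring)
        with hBdef
      have hBapp : ∀ u v : W, B u v = (e'.symm u) v + (e'.symm v) u := fun u v => rfl
      have hBsym : ∀ u v : W, B u v = B v u := by
        intro u v
        rw [hBapp, hBapp, add_comm]
      have hfP : ∀ w : W, f w w w = lam w * B w w := by
        intro w
        have h1 : f w w w = ((2 * a - 2 * a') * χ w) * (e'.symm w) w := by
          conv_lhs => rw [hfww w]
          rw [LinearMap.smul_apply, smul_eq_mul]
        rw [h1, hBapp]
        simp only [hlamdef, LinearMap.smul_apply, smul_eq_mul]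
        ring
      have hlam : lam ≠ 0 := by
        refine DFunLike.ne_iff.mpr ⟨w₁, ?_⟩
        simp only [hlamdef, LinearMap.smul_apply, smul_eq_mul, LinearMap.zero_apply]
        exact mul_ne_zero (div_ne_zero hd0 two_ne_zero) hw₁'
      have hB0 : B ≠ 0 := by
        intro hB
        have hz : ∀ w : W, f w w w = 0 := by
          intro w
          rw [hfP w, hB]
          simp
        exact hf (cubic_zero_aux f hsym1 hsym2 hz)
      exact hirr ⟨lam, B, hlam, hB0, hBsym, hfP⟩
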